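/- arXiv:2410.04326 — 2 statements merged into one kernel-verified Lean document; each statement's English description precedes it below -/
import Mathlib

section
/- Every stable ordered-union ultrafilter U on FIN is rapid: there is a function h : ω → ω (one may take h(n) = 2ⁿ − 1) such that for every sequence (P_n)_{n∈ω} of finite subsets of FIN there exists A ∈ U with |A ∩ P_n| ≤ h(n) for all n ∈ ω. -/
open Classical

attribute [local instance] Classical.propDecidable

set_option maxHeartbeats 1000000

/-! ### FIN and block sequences -/

/-- `FIN`: the finite nonempty subsets of `ℕ`. -/
abbrev FIN : Type := {s : Finset ℕ // s.Nonempty}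

instance : Inhabited FIN := ⟨⟨{0}, Finset.singleton_nonempty 0⟩⟩

/-- The least element of a member of `FIN`. -/
def sMin (s : FIN) : ℕ := s.1.min' s.2

/-- The greatest element of a member of `FIN`. -/
def sMax (s : FIN) : ℕ := s.1.max' s.2

/-- `minmax(s) = (min s, max s)`. -/
def minmaxF (s : FIN) : ℕ × ℕ := (sMin s, sMax s)

/-- `s <_b t`: the block `s` lies entirely below the block `t`. -/
def blt (s t : FIN) : Prop := sMax s < sMin t

/-- Union of two members of `FIN`. -/
def funion (s t : FIN) : FIN :=
  ⟨s.1 ∪ t.1, by rcases s.2 with ⟨x, hx⟩; exact ⟨x, Finset.mem_union_left _ hx⟩⟩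

/-- `X : ℕ → FIN` is an infinite block sequence. -/
def IsBSeq (X : ℕ → FIN) : Prop := ∀ i, blt (X i) (X (i + 1))

/-- A finite block sequence, coded as a list. -/
def IsFBSeq (a : List FIN) : Prop := a.Chain' blt

/-- `[X]`: the set of unions of finitely many (at least one) blocks of `X`. -/
def BU (X : ℕ → FIN) : Set FIN :=
  {s | ∃ I : Finset ℕ, I.Nonempty ∧ s.1 = I.biUnion fun i => (X i).1}

/-- `X ≤ Y` for infinite block sequences. -/
def seqLE (X Y : ℕ → FIN) : Prop := ∀ i, X i ∈ BU Y

/-- `a ≤ Y` for a finite block sequence `a`. -/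
def finLE (a : List FIN) (Y : ℕ → FIN) : Prop := ∀ s ∈ a, s ∈ BU Y

/-- every block of `a` lies below every block of `x`. -/
def listblt (a x : List FIN) : Prop := ∀ s ∈ a, ∀ t ∈ x, blt s t

/-- `X ≤* Y`: some tail `X/n` satisfies `X/n ≤ Y`. -/
def leStar (X Y : ℕ → FIN) : Prop := ∃ n : ℕ, ∀ i, n < sMin (X i) → X i ∈ BU Y

/-- `U` is an ordered-union ultrafilter on `FIN`. -/
def IsOrderedUnion (U : Ultrafilter FIN) : Prop :=
  ∀ A ∈ U, ∃ X : ℕ → FIN, IsBSeq X ∧ BU X ∈ U ∧ BU X ⊆ A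

/-- `U` is a stable ordered-union ultrafilter on `FIN`. -/
def IsStableOrderedUnion (U : Ultrafilter FIN) : Prop :=
  IsOrderedUnion U ∧
    ∀ Xs : ℕ → ℕ → FIN, (∀ i, IsBSeq (Xs i)) → (∀ i, BU (Xs i) ∈ U) →
      (∀ i, leStar (Xs (i + 1)) (Xs i)) →
      ∃ X : ℕ → FIN, IsBSeq X ∧ BU X ∈ U ∧ ∀ i, leStar X (Xs i)

/-! ### Tukey and Rudin–Keisler notions -/

/-- `B` is a filter base (cofinal subset) for the ultrafilter `U`. -/
def IsBaseFor {α : Type} (U : Ultrafilter α) (B : Set (Set α)) : Prop :=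
  (∀ b ∈ B, b ∈ U) ∧ ∀ A ∈ U, ∃ b ∈ B, b ⊆ A

/-- `V ≤_T U`: Tukey reducibility. -/
def TukeyLE {β α : Type} (V : Ultrafilter β) (U : Ultrafilter α) : Prop :=
  ∃ f : Set α → Set β, ∀ B : Set (Set α), IsBaseFor U B → IsBaseFor V (f '' B)

/-- `U ≡_T V`: Tukey equivalence. -/
def TukeyEquiv {α β : Type} (U : Ultrafilter α) (V : Ultrafilter β) : Prop :=
  TukeyLE U V ∧ TukeyLE V U

/-- `V` is nonprincipal. -/
def Nonprincipal {α : Type} (V : Ultrafilter α) : Prop := ∀ a : α, V ≠ pure a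

/-- `U` and `V` are isomorphic (Rudin–Keisler equivalent): some bijection of the base
sets maps one to the other. -/
def RKIso {α β : Type} (U : Ultrafilter α) (V : Ultrafilter β) : Prop :=
  ∃ e : α ≃ β, Ultrafilter.map (fun a => e a) U = V

/-- The Fubini limit `lim_{i → V} W_i`, an ultrafilter on `I × A`. -/
def fubini {I A : Type} (V : Ultrafilter I) (W : I → Ultrafilter A) : Ultrafilter (I × A) :=
  V.bind fun i => (W i).map fun a => (i, a)

/-- The class `C₀ = {U, U_min, U_max, U_minmax}`. -/
inductive InC0 (U : Ultrafilter FIN) : ∀ {α : Type}, Ultrafilter α → Prop where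
  | u : InC0 U U
  | min : InC0 U (U.map sMin)
  | max : InC0 U (U.map sMax)
  | minmax : InC0 U (U.map minmaxF)

/-- The class `C_{ω₁}` of countable Fubini iterates of `U, U_min, U_max, U_minmax`. -/
inductive InC (U : Ultrafilter FIN) : ∀ {α : Type}, Ultrafilter α → Prop where
  | base {α : Type} (V : Ultrafilter α) : InC0 U V → InC U V
  | fub {I A : Type} (V : Ultrafilter I) (W : I → Ultrafilter A) :
      InC0 U V → (∀ i, InC U (W i)) → InC U (fubini V W)

/-- The class `D_{ω₁}(W)` of countable Fubini iterates of a single ultrafilter `W`. -/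
inductive IterC {β : Type} (W : Ultrafilter β) : ∀ {α : Type}, Ultrafilter α → Prop where
  | base : IterC W W
  | fub {A : Type} (Ws : β → Ultrafilter A) : (∀ i, IterC W (Ws i)) → IterC W (fubini W Ws)

/-! ### Fronts -/

/-- `a` is an initial segment of the infinite block sequence `Y`. -/
def IsInit (a : List FIN) (Y : ℕ → FIN) : Prop := ∀ i : Fin a.length, a.get i = Y i

/-- Nash-Williams family: no member is a proper initial segment of another. -/
def IsNashWilliams (B : Set (List FIN)) : Prop :=
  ∀ a ∈ B, ∀ b ∈ B, a <+: b → a = b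

/-- `F` is a front on `X`. -/
def IsFront (F : Set (List FIN)) (X : ℕ → FIN) : Prop :=
  IsNashWilliams F ∧ (∀ a ∈ F, IsFBSeq a ∧ finLE a X) ∧
    ∀ Y : ℕ → FIN, IsBSeq Y → seqLE Y X → ∃ a ∈ F, IsInit a Y

/-- `F̂`: all initial segments of members of `F` (including the empty sequence). -/
def hatF (F : Set (List FIN)) : Set (List FIN) := {a | ∃ b ∈ F, a <+: b}

/-- `F|Y`. -/
def frontRestrict (F : Set (List FIN)) (Y : ℕ → FIN) : Set (List FIN) :=
  {a | a ∈ F ∧ finLE a Y}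

/-- `F̂|Y`. -/
def hatRestrict (F : Set (List FIN)) (Y : ℕ → FIN) : Set (List FIN) :=
  {a | a ∈ hatF F ∧ finLE a Y}

/-! ### Uniform fronts -/

/-- `X/n`, the tail of `X` made of blocks with minimum `> n`. -/
noncomputable def tailSeq (X : ℕ → FIN) (n : ℕ) : ℕ → FIN := fun j =>
  if h : ∃ i, n < sMin (X i) then X (Nat.find h + j) else X j

/-- `B_(s) = {a : s <_b a, s⌢a ∈ B}`. -/
def Bsub (B : Set (List FIN)) (s : FIN) : Set (List FIN) :=
  {a | (∀ t ∈ a, blt s t) ∧ (s :: a) ∈ B}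

/-- A set `A ⊆ FIN` is small if it contains no `[Z]`. -/
def IsSmallSet (A : Set FIN) : Prop := ∀ Z : ℕ → FIN, IsBSeq Z → ¬ BU Z ⊆ A

/-- `B` is `α`-uniform on `X`. -/
inductive AlphaUniform : Ordinal.{0} → Set (List FIN) → (ℕ → FIN) → Prop where
  | zero (X : ℕ → FIN) : AlphaUniform 0 ({([] : List FIN)} : Set (List FIN)) X
  | succ (β : Ordinal.{0}) (B : Set (List FIN)) (X : ℕ → FIN)
      (h : ∀ s ∈ BU X, AlphaUniform β (Bsub B s) (tailSeq X (sMax s))) :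
      AlphaUniform (β + 1) B X
  | limit (α : Ordinal.{0}) (B : Set (List FIN)) (X : ℕ → FIN) (f : FIN → Ordinal.{0})
      (hl : Order.IsSuccLimit α)
      (h1 : ∀ s ∈ BU X, f s < α)
      (h2 : ∀ s ∈ BU X, AlphaUniform (f s) (Bsub B s) (tailSeq X (sMax s)))
      (h3 : ∀ γ < α, IsSmallSet {s | s ∈ BU X ∧ f s ≤ γ}) :
      AlphaUniform α B X

/-- `B` is a uniform family on `X` (i.e. `α`-uniform for some `α < ω₁`). -/
def IsUniformFam (B : Set (List FIN)) (X : ℕ → FIN) : Prop :=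
  ∃ α : Ordinal.{0}, α < (Cardinal.aleph 1).ord ∧ AlphaUniform α B X

/-! ### Separation types and the canonical map `Γ_γ` -/

/-- The six labels `sm, min-sep, max-sep, minmax-sep, sss, vss`. -/
inductive SepType : Type where
  | sm | minsep | maxsep | minmaxsep | sss | vss
  deriving DecidableEq

/-- The maps on `FIN` associated to the labels. -/
def SepType.eval : SepType → FIN → Finset ℕ
  | .sm, _ => ∅
  | .minsep, s => {sMin s}
  | .maxsep, s => {sMax s}
  | .minmaxsep, s => {sMin s, sMax s}
  | .sss, s => s.1
  | .vss, s => s.1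

/-- One step `k_i ↦ k_{i+1}` in the construction of `Γ_γ(a)`. -/
noncomputable def nextIdx (γ : List FIN → SepType) (a : List FIN) (k : ℕ) : ℕ :=
  if a.length ≤ k then a.length
  else if γ (a.take k) = SepType.sss then
    (if h : ∃ m, k < m ∧ m ≤ a.length ∧ γ (a.take (m - 1)) = SepType.vss then Nat.find h
     else a.length)
  else if h2 : γ (a.take k) = SepType.minsep ∧
      ∃ l, k < l ∧ l < a.length ∧ γ (a.take l) ≠ SepType.sm then
    (if γ (a.take (Nat.find h2.2)) = SepType.maxsep then Nat.find h2.2 + 1 else k + 1)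
  else k + 1

/-- The sequence of cut points `k_0 = 0 < k_1 < ...` for `Γ_γ(a)`. -/
noncomputable def cuts (γ : List FIN → SepType) (a : List FIN) : ℕ → ℕ
  | 0 => 0
  | i + 1 => nextIdx γ a (cuts γ a i)

/-- The `i`-th entry `⋃_{k_i ≤ j < k_{i+1}} γ(a↾j)(a(j))` of `Γ_γ(a)`. -/
noncomputable def gammaSeg (γ : List FIN → SepType) (a : List FIN) (i : ℕ) : Finset ℕ :=
  (Finset.Ico (cuts γ a i) (cuts γ a (i + 1))).biUnion
    fun j => (γ (a.take j)).eval (a.getD j default)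

/-- `Γ_γ(a)`, with all terms equal to `∅` omitted. -/
noncomputable def GammaList (γ : List FIN → SepType) (a : List FIN) : List (Finset ℕ) :=
  ((List.range a.length).map (gammaSeg γ a)).filter fun s => decide (s ≠ (∅ : Finset ℕ))

/-- `x` is a finite block sequence with `a <_b x`, `x ≤ Y` and `a⌢x ∈ F`. -/
def ExtendsToFront (F : Set (List FIN)) (Y : ℕ → FIN) (a x : List FIN) : Prop :=
  IsFBSeq x ∧ listblt a x ∧ finLE x Y ∧ (a ++ x) ∈ F

/-- `l` is the least index `≥ 1` with `γ(a⌢(x↾l)) ≠ sm`. -/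
def FirstNonSm (γ : List FIN → SepType) (a x : List FIN) (l : ℕ) : Prop :=
  1 ≤ l ∧ l ≤ x.length ∧ γ (a ++ x.take l) ≠ SepType.sm ∧
    ∀ l', 1 ≤ l' → l' < l → γ (a ++ x.take l') = SepType.sm

/-- `γ` is admissible with respect to the front `F` on `X`. -/
structure Admissible (F : Set (List FIN)) (X : ℕ → FIN) (γ : List FIN → SepType) : Prop where
  cond1 : ∀ a ∈ hatF F, γ a = SepType.sss →
    ∀ x : List FIN, IsFBSeq x → listblt a x → (a ++ x) ∈ hatF F →
      ∀ k, γ (a ++ x.take k) = SepType.vss →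
        (∀ k' < k, γ (a ++ x.take k') ≠ SepType.vss) →
        ∀ l < k, γ (a ++ x.take l) = SepType.sm ∨ γ (a ++ x.take l) = SepType.sss
  cond2 : ∀ a ∈ hatF F \ F,
    (∀ x, ExtendsToFront F X a x → ∀ k ≤ x.length, γ (a ++ x.take k) = SepType.sm) ∨
    (∀ x, ExtendsToFront F X a x → ∃ k ≤ x.length, γ (a ++ x.take k) ≠ SepType.sm)
  cond3 : ∀ a ∈ hatF F \ F, γ a = SepType.minsep →
    (∀ x, ExtendsToFront F X a x → ∃ l, FirstNonSm γ a x l) →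
    ((∀ x, ExtendsToFront F X a x → ∀ l, FirstNonSm γ a x l →
        γ (a ++ x.take l) = SepType.maxsep) ∨
     (∀ x, ExtendsToFront F X a x → ∀ l, FirstNonSm γ a x l →
        γ (a ++ x.take l) ≠ SepType.maxsep))

/-! ### Marked concatenation, separating and mixing -/

/-- `a□⌢x`: concatenation, where the mark `m = true` (that is, `a↑`) means that the last
block of `a` is unioned with the first block of `x`. -/
def mcat (a : List FIN) (m : Bool) (x : List FIN) : List FIN :=
  match m, a.getLast?, x with
  | true, some s, t :: ts => a.dropLast ++ (funion s t :: ts)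
  | _, _, _ => a ++ x

/-- `[Y/a]`: the members of `[Y]` lying beyond all blocks of `a`. -/
def BUafter (Y : ℕ → FIN) (a : List FIN) : Set FIN :=
  {s | s ∈ BU Y ∧ ∀ t ∈ a, blt t s}

/-- `x` is a (possibly empty) finite block sequence `≤ Y/(a,b)`. -/
def leqAfter (x : List FIN) (Y : ℕ → FIN) (a b : List FIN) : Prop :=
  IsFBSeq x ∧ finLE x Y ∧ listblt a x ∧ listblt b x

/-- `Y` separates `a□` and `b□`. -/
def Separates (F : Set (List FIN)) (g : List FIN → ℕ) (Y : ℕ → FIN)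
    (a : List FIN) (m : Bool) (b : List FIN) (m' : Bool) : Prop :=
  ∀ x y : List FIN, leqAfter x Y a b → leqAfter y Y a b →
    mcat a m x ∈ F → mcat b m' y ∈ F → g (mcat a m x) ≠ g (mcat b m' y)

/-- `Y` mixes `a□` and `b□`. -/
def Mixes (F : Set (List FIN)) (g : List FIN → ℕ) (Y : ℕ → FIN)
    (a : List FIN) (m : Bool) (b : List FIN) (m' : Bool) : Prop :=
  ∀ Z : ℕ → FIN, IsBSeq Z → seqLE Z Y → ¬ Separates F g Z a m b m'

/-- `Y` decides `a□` and `b□`. -/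
def Decides (F : Set (List FIN)) (g : List FIN → ℕ) (Y : ℕ → FIN)
    (a : List FIN) (m : Bool) (b : List FIN) (m' : Bool) : Prop :=
  Separates F g Y a m b m' ∨ Mixes F g Y a m b m'

/-- `a□` is strongly mixed by `Y`. -/
def StronglyMixed (F : Set (List FIN)) (g : List FIN → ℕ) (Y : ℕ → FIN)
    (a : List FIN) (m : Bool) : Prop :=
  ∀ s ∈ BUafter Y a, ∀ t ∈ BUafter Y a,
    Mixes F g Y (mcat a m [s]) false (mcat a m [t]) false

/-- `a□` is min-separated by `Y`. -/
def MinSeparated (F : Set (List FIN)) (g : List FIN → ℕ) (Y : ℕ → FIN)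
    (a : List FIN) (m : Bool) : Prop :=
  ∀ s ∈ BUafter Y a, ∀ t ∈ BUafter Y a,
    (Mixes F g Y (mcat a m [s]) false (mcat a m [t]) false ↔ sMin s = sMin t)

/-- `a□` is max-separated by `Y`. -/
def MaxSeparated (F : Set (List FIN)) (g : List FIN → ℕ) (Y : ℕ → FIN)
    (a : List FIN) (m : Bool) : Prop :=
  ∀ s ∈ BUafter Y a, ∀ t ∈ BUafter Y a,
    (Mixes F g Y (mcat a m [s]) false (mcat a m [t]) false ↔ sMax s = sMax t)

/-- `a□` is minmax-separated by `Y`. -/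
def MinMaxSeparated (F : Set (List FIN)) (g : List FIN → ℕ) (Y : ℕ → FIN)
    (a : List FIN) (m : Bool) : Prop :=
  ∀ s ∈ BUafter Y a, ∀ t ∈ BUafter Y a,
    (Mixes F g Y (mcat a m [s]) false (mcat a m [t]) false ↔ (sMin s = sMin t ∧ sMax s = sMax t))

/-- `a□` is strongly separated by `Y`. -/
def StronglySeparated (F : Set (List FIN)) (g : List FIN → ℕ) (Y : ℕ → FIN)
    (a : List FIN) (m : Bool) : Prop :=
  ∀ s ∈ BUafter Y a, ∀ t ∈ BUafter Y a,
    (Mixes F g Y (mcat a m [s]) false (mcat a m [t]) false ↔ s = t)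

/-- `a□` is separated in some sense by `Y`. -/
def SepSomeSense (F : Set (List FIN)) (g : List FIN → ℕ) (Y : ℕ → FIN)
    (a : List FIN) (m : Bool) : Prop :=
  MinSeparated F g Y a m ∨ MaxSeparated F g Y a m ∨ MinMaxSeparated F g Y a m ∨
    StronglySeparated F g Y a m

/-- `a□` is completely decided by `Y`. -/
def CompletelyDecided (F : Set (List FIN)) (g : List FIN → ℕ) (Y : ℕ → FIN)
    (a : List FIN) (m : Bool) : Prop :=
  StronglyMixed F g Y a m ∨ SepSomeSense F g Y a m

/-- `a□` is still strongly separated by `Y`. -/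
def StillStronglySep (F : Set (List FIN)) (g : List FIN → ℕ) (Y : ℕ → FIN)
    (a : List FIN) (m : Bool) : Prop :=
  StronglySeparated F g Y a m ∧
    ∀ s ∈ BUafter Y a, Mixes F g Y (mcat a m [s]) false (a ++ [s]) true

/-- `a□` is very strongly separated by `Y`. -/
def VeryStronglySep (F : Set (List FIN)) (g : List FIN → ℕ) (Y : ℕ → FIN)
    (a : List FIN) (m : Bool) : Prop :=
  StronglySeparated F g Y a m ∧
    ∀ s ∈ BUafter Y a, Separates F g Y (mcat a m [s]) false (a ++ [s]) true

/-- A zero-one law: the relation `P s t` holds for all admissible `s <_b t ∈ [Y/(a,b)]`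
or for none of them. -/
def ZOL (Y : ℕ → FIN) (a b : List FIN) (D P : FIN → FIN → Prop) : Prop :=
  (∀ s t : FIN, s ∈ BUafter Y (a ++ b) → t ∈ BUafter Y (a ++ b) → blt s t → D s t → P s t) ∨
  (∀ s t : FIN, s ∈ BUafter Y (a ++ b) → t ∈ BUafter Y (a ++ b) → blt s t → D s t → ¬ P s t)

/-- `x` is a finite block sequence with `a <_b x`, `x ≤ Y` and `a□⌢x ∈ F`. -/
def ExtendsToFrontM (F : Set (List FIN)) (Y : ℕ → FIN) (a : List FIN) (m : Bool)
    (x : List FIN) : Prop :=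
  IsFBSeq x ∧ listblt a x ∧ finLE x Y ∧ mcat a m x ∈ F

/-- `k` is the least stage `≥ 1` such that `a⌢(x↾k)` is separated in some sense by `Y`. -/
def LeastSepStage (F : Set (List FIN)) (g : List FIN → ℕ) (Y : ℕ → FIN)
    (a x : List FIN) (k : ℕ) : Prop :=
  1 ≤ k ∧ k ≤ x.length ∧ SepSomeSense F g Y (a ++ x.take k) false ∧
    ∀ k', 1 ≤ k' → k' < k → ¬ SepSomeSense F g Y (a ++ x.take k') false

/-- `Y` is canonical for `g`. -/
def CanonicalFor (F : Set (List FIN)) (g : List FIN → ℕ) (Y : ℕ → FIN) : Prop :=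
  (∀ a ∈ hatRestrict F Y, ∀ b ∈ hatRestrict F Y, ∀ m m' : Bool, Decides F g Y a m b m') ∧
  (∀ a ∈ hatRestrict F Y, ∀ m : Bool, CompletelyDecided F g Y a m) ∧
  (∀ a ∈ hatRestrict F Y, ∀ ma ms : Bool,
    ZOL Y a a (fun s _ => mcat a ma [s] ∈ hatRestrict F Y)
      (fun s _ => Mixes F g Y a ma (mcat a ma [s]) ms)) ∧
  (∀ a ∈ hatRestrict F Y, ∀ b ∈ hatRestrict F Y, ∀ ma mb ms ms' : Bool,
    ZOL Y a b
      (fun s _ => mcat a ma [s] ∈ hatRestrict F Y ∧ mcat b mb [s] ∈ hatRestrict F Y)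
      (fun s _ => Mixes F g Y (mcat a ma [s]) ms (mcat b mb [s]) ms')) ∧
  (∀ a ∈ hatRestrict F Y, ∀ ma ms mt : Bool,
    ZOL Y a a
      (fun s t => mcat a ma [s] ∈ hatRestrict F Y ∧
        mcat (mcat a ma [s]) ms [t] ∈ hatRestrict F Y)
      (fun s t => Mixes F g Y (mcat a ma [s]) ms (mcat (mcat a ma [s]) ms [t]) mt)) ∧
  (∀ a ∈ hatRestrict F Y, ∀ b ∈ hatRestrict F Y, ∀ ma mb ms ms' mt : Bool,
    ZOL Y a b
      (fun s t => mcat a ma [s] ∈ hatRestrict F Y ∧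
        mcat (mcat b mb [s]) ms' [t] ∈ hatRestrict F Y)
      (fun s t => Mixes F g Y (mcat a ma [s]) ms (mcat (mcat b mb [s]) ms' [t]) mt)) ∧
  (∀ a : List FIN, ∀ m : Bool,
    ((a ∈ hatRestrict F Y ∧ a ∉ F) ∨ (a ∈ F ∧ finLE a Y ∧ m = true)) →
    ((∀ x, ExtendsToFrontM F Y a m x →
        ∀ k, 1 ≤ k → k ≤ x.length → StronglyMixed F g Y (mcat a m (x.take k)) false) ∨
     (∀ x, ExtendsToFrontM F Y a m x →
        ∃ k, 1 ≤ k ∧ k ≤ x.length ∧ SepSomeSense F g Y (mcat a m (x.take k)) false))) ∧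
  (∀ a ∈ hatRestrict F Y, MinSeparated F g Y a false →
    (∀ x, ExtendsToFrontM F Y a false x →
      ∃ k, 1 ≤ k ∧ k ≤ x.length ∧ SepSomeSense F g Y (a ++ x.take k) false) →
    ((∀ x, ExtendsToFrontM F Y a false x → ∀ k, LeastSepStage F g Y a x k →
        MaxSeparated F g Y (a ++ x.take k) false) ∨
     (∀ x, ExtendsToFrontM F Y a false x → ∀ k, LeastSepStage F g Y a x k →
        ¬ MaxSeparated F g Y (a ++ x.take k) false)))

/-- The tripling operation `Y ↦ (Y(3i) ∪ Y(3i+1) ∪ Y(3i+2))_{i}`. -/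
def tripleUp (Y : ℕ → FIN) : ℕ → FIN := fun i =>
  funion (Y (3 * i)) (funion (Y (3 * i + 1)) (Y (3 * i + 2)))

/-- `Z/a`. -/
noncomputable def seqAfter (Z : ℕ → FIN) (a : List FIN) : ℕ → FIN :=
  match a.getLast? with
  | none => Z
  | some s => tailSeq Z (sMax s)

/-- `Z/(a,b)`. -/
noncomputable def seqAfter2 (Z : ℕ → FIN) (a b : List FIN) : ℕ → FIN :=
  seqAfter (seqAfter Z a) b

/-- `γ` is the parameter function of the canonical `Y`: it records, for each
`a ∈ (F̂∖F)|Y`, the way in which `a` is completely decided by `Y`. -/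
def IsParameterOf (F : Set (List FIN)) (g : List FIN → ℕ) (Y : ℕ → FIN)
    (γ : List FIN → SepType) : Prop :=
  ∀ a : List FIN, a ∈ hatF F → a ∉ F → finLE a Y →
    ((γ a = SepType.sm ↔ StronglyMixed F g Y a false) ∧
     (γ a = SepType.minsep ↔ MinSeparated F g Y a false) ∧
     (γ a = SepType.maxsep ↔ MaxSeparated F g Y a false) ∧
     (γ a = SepType.minmaxsep ↔ MinMaxSeparated F g Y a false) ∧
     (γ a = SepType.sss ↔ StillStronglySep F g Y a false) ∧
     (γ a = SepType.vss ↔ VeryStronglySep F g Y a false))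

/-- The family `U↾F` generated by the sets `F|Y` with `[Y] ∈ U`, `Y ≤ X`. -/
def UFront (U : Ultrafilter FIN) (F : Set (List FIN)) (X : ℕ → FIN) : Set (Set (List FIN)) :=
  {A | A ⊆ F ∧ ∃ Y : ℕ → FIN, IsBSeq Y ∧ seqLE Y X ∧ BU Y ∈ U ∧ frontRestrict F Y ⊆ A}


/-- In a block sequence, the minimum of the `j`-th block is at least `j`. -/
lemma bseq_min_le {W : ℕ → FIN} (hW : IsBSeq W) : ∀ j, j ≤ sMin (W j) := by
  intro j
  induction j with
  | zero => exact Nat.zero_le _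
  | succ j ih =>
    have h1 : sMax (W j) < sMin (W (j + 1)) := hW j
    have h2 : sMin (W j) ≤ sMax (W j) :=
      Finset.min'_le _ _ (Finset.max'_mem _ _)
    omega

/-- every stable ordered-union ultrafilter is rapid, as witnessed by
`h n = 2 ^ n - 1`. -/
theorem stmt2 (U : Ultrafilter FIN) (hU : IsStableOrderedUnion U) :
    ∃ h : ℕ → ℕ, h = (fun n => 2 ^ n - 1) ∧
      ∀ P : ℕ → Finset FIN, ∃ A ∈ U, ∀ n : ℕ, ((↑(P n) : Set FIN) ∩ A).ncard ≤ h n := by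
  refine ⟨fun n => 2 ^ n - 1, rfl, ?_⟩
  intro P
  set M : ℕ → ℕ := fun n => (Finset.range (n + 1)).sup fun j => (P j).sup sMax with hMdef
  have hMmono : Monotone M := by
    intro a b hab
    rw [hMdef]
    exact Finset.sup_mono (Finset.range_subset_range.mpr (by omega))
  have hMP : ∀ n, ∀ s ∈ P n, sMax s ≤ M n := by
    intro n s hs
    calc sMax s ≤ (P n).sup sMax := Finset.le_sup hs
      _ ≤ M n := by
          rw [hMdef]
          exact Finset.le_sup (f := fun j => (P j).sup sMax) (Finset.self_mem_range_succ n)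
  have hA : {s : FIN | M (sMin s) < sMax s} ∈ U := by
    by_contra hc
    have hcc : {s : FIN | M (sMin s) < sMax s}ᶜ ∈ U :=
      Ultrafilter.compl_mem_iff_notMem.mpr hc
    obtain ⟨W, hW, hWU, hWsub⟩ := hU.1 _ hcc
    set j := M (sMin (W 0)) + 1 with hj
    set s : FIN := funion (W 0) (W j) with hs
    have hsW : s ∈ BU W := by
      refine ⟨{0, j}, ⟨0, by simp⟩, ?_⟩
      simp [hs, funion]
    have hmem := hWsub hsW
    simp only [Set.mem_compl_iff, Set.mem_setOf_eq, not_lt] at hmem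
    have hmin : sMin s ≤ sMin (W 0) := by
      apply Finset.min'_le
      have : sMin (W 0) ∈ (W 0).1 := Finset.min'_mem _ _
      simp only [hs, funion]
      exact Finset.mem_union_left _ this
    have hmax : j ≤ sMax s := by
      have h1 : j ≤ sMin (W j) := bseq_min_le hW j
      have h2 : sMin (W j) ≤ sMax (W j) := Finset.min'_le _ _ (Finset.max'_mem _ _)
      have h3 : sMax (W j) ≤ sMax s := by
        apply Finset.le_max'
        have : sMax (W j) ∈ (W j).1 := Finset.max'_mem _ _
        simp only [hs, funion]
        exact Finset.mem_union_right _ this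
      omega
    have h4 : M (sMin s) ≤ M (sMin (W 0)) := hMmono hmin
    omega
  obtain ⟨X, hX, hXU, hXA⟩ := hU.1 _ hA
  have hXfast : ∀ i, M i < sMax (X i) := by
    intro i
    have hXi : X i ∈ BU X := ⟨{i}, Finset.singleton_nonempty i, by simp⟩
    have h1 : M (sMin (X i)) < sMax (X i) := hXA hXi
    exact lt_of_le_of_lt (hMmono (bseq_min_le hX i)) h1
  refine ⟨BU X, hXU, ?_⟩
  intro n
  classical
  set F : Finset (Finset ℕ) :=
    (((Finset.range n).powerset.erase ∅).image fun I => I.biUnion fun i => (X i).1) with hF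
  have hsub : Subtype.val '' ((↑(P n) : Set FIN) ∩ BU X) ⊆ ↑F := by
    rintro J ⟨s, ⟨hsP, hsX⟩, rfl⟩
    obtain ⟨I, hIne, hIeq⟩ := hsX
    have hIr : I ⊆ Finset.range n := by
      intro i hi
      have h1 : sMax (X i) ≤ sMax s := by
        apply Finset.le_max'
        rw [hIeq]
        exact Finset.mem_biUnion.mpr ⟨i, hi, Finset.max'_mem _ _⟩
      have h2 : sMax s ≤ M n := hMP n s hsP
      have h3 := hXfast i
      simp only [Finset.mem_range]
      by_contra hni
      push_neg at hni
      have h5 := hMmono hni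
      omega
    simp only [hF, Finset.coe_image, Set.mem_image, Finset.mem_coe, Finset.mem_erase,
      Finset.mem_powerset]
    exact ⟨I, ⟨Finset.nonempty_iff_ne_empty.mp hIne, hIr⟩, hIeq.symm⟩
  have hinj : Set.InjOn Subtype.val ((↑(P n) : Set FIN) ∩ BU X) :=
    fun a _ b _ h => Subtype.ext h
  calc ((↑(P n) : Set FIN) ∩ BU X).ncard
      = (Subtype.val '' ((↑(P n) : Set FIN) ∩ BU X)).ncard :=
        (Set.ncard_image_of_injOn hinj).symm
    _ ≤ (↑F : Set (Finset ℕ)).ncard := Set.ncard_le_ncard hsub F.finite_toSet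
    _ = F.card := Set.ncard_coe_finset F
    _ ≤ ((Finset.range n).powerset.erase ∅).card := Finset.card_image_le
    _ = 2 ^ n - 1 := by
        rw [Finset.card_erase_of_mem (Finset.empty_mem_powerset _), Finset.card_powerset,
          Finset.card_range]
end

section
/- Let F be a front on X ∈ FIN^[∞] and g : F → ω. For every Y ≤ X there is Y' ≤ Y such that Y' decides a□ and b□ for all a, b ∈ F̂|Y' and all choices of marks. -/
open Classical

attribute [local instance] Classical.propDecidable

set_option maxHeartbeats 1000000

/-! ### Auxiliary lemmas for stmt9 -/

lemma FIN.sMin_le' {s : FIN} {x : ℕ} (hx : x ∈ s.1) : sMin s ≤ x := Finset.min'_le _ _ hx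
lemma FIN.le_sMax' {s : FIN} {x : ℕ} (hx : x ∈ s.1) : x ≤ sMax s := Finset.le_max' _ _ hx
lemma FIN.sMin_mem' (s : FIN) : sMin s ∈ s.1 := Finset.min'_mem _ _
lemma FIN.sMax_mem' (s : FIN) : sMax s ∈ s.1 := Finset.max'_mem _ _
lemma FIN.sMin_le_sMax' (s : FIN) : sMin s ≤ sMax s := FIN.sMin_le' (FIN.sMax_mem' s)

lemma blt_trans' {s t u : FIN} (h1 : blt s t) (h2 : blt t u) : blt s u :=
  h1.trans_le ((FIN.sMin_le_sMax' t).trans h2.le)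

instance : IsTrans FIN blt := ⟨fun _ _ _ => blt_trans'⟩

lemma mem_BU_self {W : ℕ → FIN} (i : ℕ) : W i ∈ BU W :=
  ⟨{i}, Finset.singleton_nonempty i, by simp⟩

lemma seqLE_refl (W : ℕ → FIN) : seqLE W W := fun i => mem_BU_self i

lemma mem_BU_of_biUnion {W : ℕ → FIN} {s : FIN} {f : ℕ → FIN} {I : Finset ℕ}
    (hI : I.Nonempty) (hs : s.1 = I.biUnion fun i => (f i).1)
    (hf : ∀ i ∈ I, f i ∈ BU W) : s ∈ BU W := by
  have h : ∀ i, ∃ J : Finset ℕ, i ∈ I → (J.Nonempty ∧ (f i).1 = J.biUnion fun j => (W j).1) := by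
    intro i
    by_cases hi : i ∈ I
    · obtain ⟨J, hJ1, hJ2⟩ := hf i hi
      exact ⟨J, fun _ => ⟨hJ1, hJ2⟩⟩
    · exact ⟨∅, fun h => absurd h hi⟩
  choose J hJ using h
  refine ⟨I.biUnion J, ?_, ?_⟩
  · obtain ⟨i, hi⟩ := hI
    exact Finset.biUnion_nonempty.mpr ⟨i, hi, (hJ i hi).1⟩
  · rw [hs, Finset.biUnion_biUnion]
    exact Finset.biUnion_congr rfl fun i hi => (hJ i hi).2

lemma BU_mono {Z W : ℕ → FIN} (h : seqLE Z W) : BU Z ⊆ BU W := by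
  intro s hs
  obtain ⟨I, hI, hsI⟩ := hs
  exact mem_BU_of_biUnion hI hsI fun i _ => h i

lemma seqLE_trans' {A B C : ℕ → FIN} (h1 : seqLE A B) (h2 : seqLE B C) : seqLE A C :=
  fun i => BU_mono h2 (h1 i)

lemma finLE_mono {x : List FIN} {Z W : ℕ → FIN} (h : BU Z ⊆ BU W) (hx : finLE x Z) :
    finLE x W := fun s hs => h (hx s hs)

lemma Separates_anti {F : Set (List FIN)} {g : List FIN → ℕ} {Z W : ℕ → FIN}
    {a : List FIN} {m : Bool} {b : List FIN} {m' : Bool} (h : BU Z ⊆ BU W)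
    (hs : Separates F g W a m b m') : Separates F g Z a m b m' := by
  intro x y hx hy hxF hyF
  exact hs x y ⟨hx.1, finLE_mono h hx.2.1, hx.2.2.1, hx.2.2.2⟩
    ⟨hy.1, finLE_mono h hy.2.1, hy.2.2.1, hy.2.2.2⟩ hxF hyF

lemma Mixes_anti {F : Set (List FIN)} {g : List FIN → ℕ} {Z W : ℕ → FIN}
    {a : List FIN} {m : Bool} {b : List FIN} {m' : Bool} (h : seqLE Z W)
    (hs : Mixes F g W a m b m') : Mixes F g Z a m b m' :=
  fun V hVB hVZ => hs V hVB (seqLE_trans' hVZ h)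

lemma Decides_anti {F : Set (List FIN)} {g : List FIN → ℕ} {Z W : ℕ → FIN}
    {a : List FIN} {m : Bool} {b : List FIN} {m' : Bool} (h : seqLE Z W)
    (hs : Decides F g W a m b m') : Decides F g Z a m b m' :=
  hs.imp (Separates_anti (BU_mono h)) (Mixes_anti h)

lemma lemA (F : Set (List FIN)) (g : List FIN → ℕ) (W : ℕ → FIN) (hW : IsBSeq W)
    (a : List FIN) (m : Bool) (b : List FIN) (m' : Bool) :
    ∃ W', IsBSeq W' ∧ seqLE W' W ∧ Decides F g W' a m b m' := by
  by_cases hex : ∃ Z, IsBSeq Z ∧ seqLE Z W ∧ Separates F g Z a m b m'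
  · obtain ⟨Z, h1, h2, h3⟩ := hex
    exact ⟨Z, h1, h2, Or.inl h3⟩
  · exact ⟨W, hW, seqLE_refl W, Or.inr fun Z h1 h2 h3 => hex ⟨Z, h1, h2, h3⟩⟩

lemma lemE (F : Set (List FIN)) (g : List FIN → ℕ) (W : ℕ → FIN) (hW : IsBSeq W)
    (P : List (List FIN × Bool × List FIN × Bool)) :
    ∃ W', IsBSeq W' ∧ seqLE W' W ∧
      ∀ p ∈ P, Decides F g W' p.1 p.2.1 p.2.2.1 p.2.2.2 := by
  induction P with
  | nil => exact ⟨W, hW, seqLE_refl W, by simp⟩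
  | cons p P ih =>
    obtain ⟨W1, h1B, h1le, h1dec⟩ := ih
    obtain ⟨W2, h2B, h2le, h2dec⟩ := lemA F g W1 h1B p.1 p.2.1 p.2.2.1 p.2.2.2
    refine ⟨W2, h2B, seqLE_trans' h2le h1le, ?_⟩
    intro q hq
    rcases List.mem_cons.mp hq with rfl | hq
    · exact h2dec
    · exact Decides_anti h2le (h1dec q hq)

lemma isBSeq_tail {W : ℕ → FIN} (h : IsBSeq W) : IsBSeq (fun j => W (j + 1)) :=
  fun j => h (j + 1)

lemma seqLE_tail (W : ℕ → FIN) : seqLE (fun j => W (j + 1)) W :=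
  fun i => mem_BU_self (i + 1)

lemma isBSeq_blt {W : ℕ → FIN} (hW : IsBSeq W) {i j : ℕ} (hij : i < j) :
    blt (W i) (W j) := by
  induction j with
  | zero => omega
  | succ k ih =>
    rcases Nat.lt_succ_iff_lt_or_eq.mp hij with h | h
    · exact blt_trans' (ih h) (hW k)
    · subst h; exact hW i

lemma sMin_mono {W : ℕ → FIN} (hW : IsBSeq W) {i j : ℕ} (hij : i ≤ j) :
    sMin (W i) ≤ sMin (W j) := by
  rcases Nat.lt_or_ge i j with h | h
  · exact ((FIN.sMin_le_sMax' (W i)).trans_lt (isBSeq_blt hW h)).le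
  · have : i = j := le_antisymm hij h
    subst this; exact le_refl _

lemma sMax_smono {W : ℕ → FIN} (hW : IsBSeq W) {i j : ℕ} (hij : i < j) :
    sMax (W i) < sMax (W j) :=
  (isBSeq_blt hW hij).trans_le (FIN.sMin_le_sMax' (W j))

lemma sMin_ge {W : ℕ → FIN} (hW : IsBSeq W) (n : ℕ) : n ≤ sMin (W n) := by
  induction n with
  | zero => exact Nat.zero_le _
  | succ k ih =>
    have h1 : sMax (W k) < sMin (W (k + 1)) := hW k
    have h2 : sMin (W k) ≤ sMax (W k) := FIN.sMin_le_sMax' (W k)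
    omega

lemma blt_of_mem_BU_tail {W : ℕ → FIN} (hW : IsBSeq W) {s : FIN}
    (hs : s ∈ BU fun j => W (j + 1)) : blt (W 0) s := by
  obtain ⟨I, hI, hsI⟩ := hs
  have h1 : sMin s ∈ s.1 := FIN.sMin_mem' s
  rw [hsI] at h1
  obtain ⟨i, hi, hmem⟩ := Finset.mem_biUnion.mp h1
  have h2 : sMin (W (i + 1)) ≤ sMin s := FIN.sMin_le' hmem
  have h3 : blt (W 0) (W (i + 1)) := isBSeq_blt hW (Nat.succ_pos i)
  exact lt_of_lt_of_le h3 h2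

/-- Key transfer lemma: a decision made by `W` transfers to `Z` provided all blocks of
`Z` lying beyond `a` and `b` belong to `[W]`. -/
lemma decides_transfer (F : Set (List FIN)) (g : List FIN → ℕ) (W Z : ℕ → FIN)
    (a b : List FIN) (m m' : Bool) (M : ℕ)
    (hM : ∀ t ∈ a ++ b, sMax t ≤ M)
    (H : ∀ s ∈ BU Z, (∀ t ∈ a ++ b, blt t s) → s ∈ BU W)
    (hdec : Decides F g W a m b m') : Decides F g Z a m b m' := by
  have key : ∀ x : List FIN, finLE x Z → listblt a x → listblt b x → finLE x W := by
    intro x hxZ hax hbx s hs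
    refine H s (hxZ s hs) ?_
    intro t ht
    rcases List.mem_append.mp ht with h | h
    · exact hax t h s hs
    · exact hbx t h s hs
  rcases hdec with hsep | hmix
  · left
    intro x y hx hy hxF hyF
    exact hsep x y ⟨hx.1, key x hx.2.1 hx.2.2.1 hx.2.2.2, hx.2.2.1, hx.2.2.2⟩
      ⟨hy.1, key y hy.2.1 hy.2.2.1 hy.2.2.2, hy.2.2.1, hy.2.2.2⟩ hxF hyF
  · right
    intro V hVB hVZ hsepV
    set V' : ℕ → FIN := fun j => V (M + 1 + j) with hV'def
    have hV'B : IsBSeq V' := by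
      intro j
      show blt (V (M + 1 + j)) (V (M + 1 + (j + 1)))
      have h : M + 1 + (j + 1) = (M + 1 + j) + 1 := by omega
      rw [h]; exact hVB _
    have hBU : BU V' ⊆ BU V := by
      intro s hs
      obtain ⟨I, hI, hsI⟩ := hs
      exact mem_BU_of_biUnion hI hsI fun i _ => mem_BU_self _
    have hV'W : seqLE V' W := by
      intro j
      refine H _ (hVZ (M + 1 + j)) ?_
      intro t ht
      have h1 : sMax t ≤ M := hM t ht
      have h2 : (M + 1 + j : ℕ) ≤ sMin (V (M + 1 + j)) := sMin_ge hVB _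
      show sMax t < sMin (V (M + 1 + j))
      omega
    exact hmix V' hV'B hV'W (Separates_anti hBU hsepV)

/-! ### Finite enumeration of small pairs -/

def allLists {α : Type} (L : List α) : ℕ → List (List α)
  | 0 => [[]]
  | n + 1 => [] :: L.flatMap fun x => (allLists L n).map (x :: ·)

lemma mem_allLists {α : Type} (L : List α) :
    ∀ (n : ℕ) (l : List α), l.length ≤ n → (∀ x ∈ l, x ∈ L) → l ∈ allLists L n := by
  intro n
  induction n with
  | zero =>
    intro l h _
    have : l = [] := List.length_eq_zero_iff.mp (Nat.le_zero.mp h)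
    simp [this, allLists]
  | succ k ih =>
    intro l hl hL
    cases l with
    | nil => simp [allLists]
    | cons x xs =>
      simp only [allLists, List.mem_cons]
      right
      rw [List.mem_flatMap]
      exact ⟨x, hL x (by simp), List.mem_map.mpr
        ⟨xs, ih xs (by simpa using hl) (fun y hy => hL y (by simp [hy])), rfl⟩⟩

noncomputable def blocksUpTo (c : ℕ) : List FIN :=
  (Finset.range c).powerset.toList.filterMap fun s =>
    if h : s.Nonempty then some ⟨s, h⟩ else none

lemma mem_blocksUpTo {c : ℕ} {t : FIN} (h : t.1 ⊆ Finset.range c) : t ∈ blocksUpTo c := by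
  rw [blocksUpTo, List.mem_filterMap]
  refine ⟨t.1, ?_, ?_⟩
  · rw [Finset.mem_toList, Finset.mem_powerset]; exact h
  · rw [dif_pos t.2]

noncomputable def pairsUpTo (c : ℕ) : List (List FIN × Bool × List FIN × Bool) :=
  (allLists (blocksUpTo c) c).flatMap fun a =>
    (allLists (blocksUpTo c) c).flatMap fun b =>
      [(a, false, b, false), (a, false, b, true), (a, true, b, false), (a, true, b, true)]

lemma mem_pairsUpTo {c : ℕ} {a b : List FIN} {m m' : Bool}
    (ha1 : a.length ≤ c) (ha2 : ∀ t ∈ a, t.1 ⊆ Finset.range c)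
    (hb1 : b.length ≤ c) (hb2 : ∀ t ∈ b, t.1 ⊆ Finset.range c) :
    (a, m, b, m') ∈ pairsUpTo c := by
  rw [pairsUpTo, List.mem_flatMap]
  refine ⟨a, mem_allLists _ _ _ ha1 (fun t ht => mem_blocksUpTo (ha2 t ht)), ?_⟩
  rw [List.mem_flatMap]
  refine ⟨b, mem_allLists _ _ _ hb1 (fun t ht => mem_blocksUpTo (hb2 t ht)), ?_⟩
  cases m <;> cases m' <;> simp

lemma chain_length_le {a : List FIN} {c : ℕ} (hc : a.Chain' blt)
    (hlt : ∀ t ∈ a, sMax t < c) : a.length ≤ c := by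
  have h1 : (a.map sMin).Chain' (· < ·) := by
    rw [List.Chain', List.isChain_map]
    exact (show List.IsChain _ _ from hc).imp fun s t hst => (FIN.sMin_le_sMax' s).trans_lt hst
  have h2 : (a.map sMin).Pairwise (· < ·) := List.isChain_iff_pairwise.mp h1
  have h3 : (a.map sMin).Nodup := h2.imp ne_of_lt
  have h4 : (a.map sMin).toFinset ⊆ Finset.range c := by
    intro x hx
    rw [List.mem_toFinset] at hx
    obtain ⟨t, ht, rfl⟩ := List.mem_map.mp hx
    exact Finset.mem_range.mpr ((FIN.sMin_le_sMax' t).trans_lt (hlt t ht))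
  have h5 := Finset.card_le_card h4
  rw [List.toFinset_card_of_nodup h3] at h5
  simpa using h5

lemma exists_sMax_bound (Q : List FIN) : ∃ B : ℕ, ∀ t ∈ Q, sMax t ≤ B := by
  induction Q with
  | nil => exact ⟨0, by simp⟩
  | cons s Q ih =>
    obtain ⟨B, hB⟩ := ih
    refine ⟨max (sMax s) B, ?_⟩
    intro t ht
    rcases List.mem_cons.mp ht with rfl | h
    · exact le_max_left _ _
    · exact (hB t h).trans (le_max_right _ _)

/-! ### The fusion sequence -/

noncomputable def stageS (F : Set (List FIN)) (g : List FIN → ℕ) (Y : ℕ → FIN)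
    (hY : IsBSeq Y) : ℕ → {W : ℕ → FIN // IsBSeq W}
  | 0 => ⟨(lemE F g Y hY (pairsUpTo 0)).choose, (lemE F g Y hY (pairsUpTo 0)).choose_spec.1⟩
  | n + 1 =>
    let s := stageS F g Y hY n
    ⟨(lemE F g (fun j => s.1 (j + 1)) (isBSeq_tail s.2) (pairsUpTo (sMax (s.1 0) + 1))).choose,
     (lemE F g (fun j => s.1 (j + 1)) (isBSeq_tail s.2)
        (pairsUpTo (sMax (s.1 0) + 1))).choose_spec.1⟩

lemma stageS_zero_spec (F : Set (List FIN)) (g : List FIN → ℕ) (Y : ℕ → FIN)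
    (hY : IsBSeq Y) :
    seqLE (stageS F g Y hY 0).1 Y ∧
      ∀ p ∈ pairsUpTo 0, Decides F g (stageS F g Y hY 0).1 p.1 p.2.1 p.2.2.1 p.2.2.2 := by
  have h := (lemE F g Y hY (pairsUpTo 0)).choose_spec
  exact ⟨h.2.1, h.2.2⟩

lemma stageS_succ_spec (F : Set (List FIN)) (g : List FIN → ℕ) (Y : ℕ → FIN)
    (hY : IsBSeq Y) (n : ℕ) :
    seqLE (stageS F g Y hY (n + 1)).1 (fun j => (stageS F g Y hY n).1 (j + 1)) ∧
      ∀ p ∈ pairsUpTo (sMax ((stageS F g Y hY n).1 0) + 1),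
        Decides F g (stageS F g Y hY (n + 1)).1 p.1 p.2.1 p.2.2.1 p.2.2.2 := by
  have h := (lemE F g (fun j => (stageS F g Y hY n).1 (j + 1))
    (isBSeq_tail (stageS F g Y hY n).2)
    (pairsUpTo (sMax ((stageS F g Y hY n).1 0) + 1))).choose_spec
  exact ⟨h.2.1, h.2.2⟩


def cutFun (Y' : ℕ → FIN) : ℕ → ℕ
  | 0 => 0
  | k + 1 => sMax (Y' k) + 1

/-- below every `Y ≤ X` there is `Y' ≤ Y` deciding all pairs `a□, b□`
with `a, b ∈ F̂|Y'`. -/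
theorem stmt9 (F : Set (List FIN)) (X : ℕ → FIN) (hXB : IsBSeq X) (hF : IsFront F X)
    (g : List FIN → ℕ) :
    ∀ Y : ℕ → FIN, IsBSeq Y → seqLE Y X →
      ∃ Y' : ℕ → FIN, IsBSeq Y' ∧ seqLE Y' Y ∧
        ∀ a ∈ hatRestrict F Y', ∀ b ∈ hatRestrict F Y', ∀ m m' : Bool,
          Decides F g Y' a m b m' := by
  intro Y hYB hYX
  set S : ℕ → {W : ℕ → FIN // IsBSeq W} := stageS F g Y hYB with hSdef
  set Y' : ℕ → FIN := fun n => (S n).1 0 with hY'def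
  have hS0le : seqLE (S 0).1 Y := (stageS_zero_spec F g Y hYB).1
  have hSsucc : ∀ n, seqLE (S (n + 1)).1 (fun j => (S n).1 (j + 1)) :=
    fun n => (stageS_succ_spec F g Y hYB n).1
  have hSdec0 : ∀ p ∈ pairsUpTo 0, Decides F g (S 0).1 p.1 p.2.1 p.2.2.1 p.2.2.2 :=
    (stageS_zero_spec F g Y hYB).2
  have hSdecS : ∀ n, ∀ p ∈ pairsUpTo (sMax (Y' n) + 1),
      Decides F g (S (n + 1)).1 p.1 p.2.1 p.2.2.1 p.2.2.2 :=
    fun n => (stageS_succ_spec F g Y hYB n).2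
  have hSleY : ∀ n, seqLE (S n).1 Y := by
    intro n
    induction n with
    | zero => exact hS0le
    | succ k ih => exact seqLE_trans' (seqLE_trans' (hSsucc k) (seqLE_tail _)) ih
  have hSmono : ∀ n k, seqLE (S (n + k)).1 (S n).1 := by
    intro n k
    induction k with
    | zero => exact seqLE_refl _
    | succ j ih => exact seqLE_trans' (seqLE_trans' (hSsucc (n + j)) (seqLE_tail _)) ih
  have hSmono' : ∀ {n i : ℕ}, n ≤ i → seqLE (S i).1 (S n).1 := by
    intro n i h
    obtain ⟨k, rfl⟩ := Nat.exists_eq_add_of_le h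
    exact hSmono n k
  have hY'B : IsBSeq Y' := by
    intro n
    exact blt_of_mem_BU_tail (S n).2 (hSsucc n 0)
  have hY'mem : ∀ n, Y' n ∈ BU (S n).1 := fun n => mem_BU_self 0
  have hY'Y : seqLE Y' Y := fun n => BU_mono (hSleY n) (hY'mem n)
  refine ⟨Y', hY'B, hY'Y, ?_⟩
  intro a ha b hb m m'
  obtain ⟨B, hB⟩ := exists_sMax_bound (a ++ b)
  have hex : ∃ n, ∀ t ∈ a ++ b, sMax t < cutFun Y' n := by
    refine ⟨B + 2, ?_⟩
    intro t ht
    have h1 : sMax t ≤ B := hB t ht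
    have h2 : (B + 1 : ℕ) ≤ sMin (Y' (B + 1)) := sMin_ge hY'B (B + 1)
    have h3 : sMin (Y' (B + 1)) ≤ sMax (Y' (B + 1)) := FIN.sMin_le_sMax' _
    show sMax t < sMax (Y' (B + 1)) + 1
    omega
  obtain ⟨n, hnspec, hnmin⟩ :
      ∃ n, (∀ t ∈ a ++ b, sMax t < cutFun Y' n) ∧
        ∀ k < n, ¬ ∀ t ∈ a ++ b, sMax t < cutFun Y' k :=
    ⟨Nat.find hex, Nat.find_spec hex, fun k hk => Nat.find_min hex hk⟩
  have hdecW : ∀ p ∈ pairsUpTo (cutFun Y' n),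
      Decides F g (S n).1 p.1 p.2.1 p.2.2.1 p.2.2.2 := by
    cases n with
    | zero => exact hSdec0
    | succ k => exact hSdecS k
  have hchain : ∀ {l : List FIN}, l ∈ hatF F → l.Chain' blt := by
    intro l hl
    obtain ⟨b', hb', hpre⟩ := hl
    exact ((hF.2.1 b' hb').1).sublist hpre.sublist
  have hasub : ∀ t ∈ a ++ b, t.1 ⊆ Finset.range (cutFun Y' n) := by
    intro t ht x hx
    exact Finset.mem_range.mpr ((FIN.le_sMax' hx).trans_lt (hnspec t ht))
  have hpmem : (a, m, b, m') ∈ pairsUpTo (cutFun Y' n) :=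
    mem_pairsUpTo
      (chain_length_le (hchain ha.1) (fun t ht => hnspec t (List.mem_append_left _ ht)))
      (fun t ht => hasub t (List.mem_append_left _ ht))
      (chain_length_le (hchain hb.1) (fun t ht => hnspec t (List.mem_append_right _ ht)))
      (fun t ht => hasub t (List.mem_append_right _ ht))
  have hdec : Decides F g (S n).1 a m b m' := hdecW _ hpmem
  refine decides_transfer F g (S n).1 Y' a b m m' B hB ?_ hdec
  intro s hs hbey
  obtain ⟨I, hI, hsI⟩ := hs
  refine mem_BU_of_biUnion hI hsI ?_
  intro i hiI
  have hni : n ≤ i := by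
    by_contra hlt
    push_neg at hlt
    obtain ⟨k, rfl⟩ : ∃ k, n = k + 1 := ⟨n - 1, by omega⟩
    have hmin := hnmin k (Nat.lt_succ_self k)
    push_neg at hmin
    obtain ⟨t, htQ, htge⟩ := hmin
    have htBU : t ∈ BU Y' := by
      rcases List.mem_append.mp htQ with h | h
      · exact ha.2 t h
      · exact hb.2 t h
    obtain ⟨J, hJne, htJ⟩ := htBU
    have hJle : ∀ j ∈ J, j ≤ k := by
      intro j hj
      by_contra hjk
      push_neg at hjk
      have h1 : (Y' j).1 ⊆ t.1 := by
        rw [htJ]; exact Finset.subset_biUnion_of_mem (fun j => (Y' j).1) hj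
      have h2 : sMax (Y' j) ≤ sMax t := FIN.le_sMax' (h1 (FIN.sMax_mem' _))
      have h3 : sMax t < cutFun Y' (k + 1) := hnspec t htQ
      have h4 : sMax (Y' k) < sMax (Y' j) := sMax_smono hY'B hjk
      have h5 : cutFun Y' (k + 1) = sMax (Y' k) + 1 := rfl
      omega
    have hkJ : k ∈ J := by
      have h1 : sMax t ∈ t.1 := FIN.sMax_mem' t
      rw [htJ] at h1
      obtain ⟨j0, hj0, hmem⟩ := Finset.mem_biUnion.mp h1
      have h2 : sMax t ≤ sMax (Y' j0) := FIN.le_sMax' hmem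
      have h3 : j0 ≤ k := hJle j0 hj0
      cases k with
      | zero =>
        have h4 : j0 = 0 := Nat.le_zero.mp h3
        exact h4 ▸ hj0
      | succ l =>
        have h4 : sMax (Y' l) + 1 ≤ sMax t := htge
        have h5 : l < j0 := by
          by_contra hc
          push_neg at hc
          have h6 : sMax (Y' j0) ≤ sMax (Y' l) := by
            rcases Nat.lt_or_ge j0 l with h | h
            · exact (sMax_smono hY'B h).le
            · have h7 : j0 = l := le_antisymm hc h
              rw [h7]
          omega
        have h6 : j0 = l + 1 := by omega
        exact h6 ▸ hj0
    have hKt : (Y' k).1 ⊆ t.1 := by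
      rw [htJ]; exact Finset.subset_biUnion_of_mem (fun j => (Y' j).1) hkJ
    have h1 : sMin s ≤ sMin (Y' i) := by
      have h0 : (Y' i).1 ⊆ s.1 := by
        rw [hsI]; exact Finset.subset_biUnion_of_mem (fun j => (Y' j).1) hiI
      exact FIN.sMin_le' (h0 (FIN.sMin_mem' _))
    have h2 : sMin (Y' i) ≤ sMin (Y' k) := sMin_mono hY'B (by omega)
    have h3 : sMin (Y' k) ≤ sMax (Y' k) := FIN.sMin_le_sMax' _
    have h4 : sMax (Y' k) ≤ sMax t := FIN.le_sMax' (hKt (FIN.sMax_mem' _))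
    have h5 : sMax t < sMin s := hbey t htQ
    omega
  exact hSmono' hni 0
end
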